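/- Fix integers d ≥ 1 and 1 ≤ k ≤ d. If {i_1 < ... < i_k} is a uniformly random k-subset of {1,...,d} and F = 1/(d · ∏_{j=1}^k (d − i_j + 1)), then E[F] ≤ (1/d) · ((1 + log d)/d)^k. -/

import Mathlib

open Finset

noncomputable def Esym (x : ℕ → ℝ) (A : Finset ℕ) (k : ℕ) : ℝ :=
  ∑ S ∈ A.powersetCard k, ∏ i ∈ S, x i

lemma Esym_nonneg {x : ℕ → ℝ} {A : Finset ℕ} (hx : ∀ i ∈ A, 0 ≤ x i) (k : ℕ) :
    0 ≤ Esym x A k := by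
  refine Finset.sum_nonneg fun S hS => Finset.prod_nonneg fun i hi => ?_
  exact hx i ((Finset.mem_powersetCard.mp hS).1 hi)

lemma Esym_zero (x : ℕ → ℝ) (A : Finset ℕ) : Esym x A 0 = 1 := by
  simp [Esym, Finset.powersetCard_zero]

lemma Esym_one (x : ℕ → ℝ) (A : Finset ℕ) : Esym x A 1 = ∑ i ∈ A, x i := by
  simp [Esym, Finset.powersetCard_one,
    Finset.sum_image (fun a _ b _ h => Finset.singleton_injective h)]

/-- L3: unfolding a sum over (m+1)-subsets with a marked element inside. -/
lemma sum_erase_powersetCard (B : Finset ℕ) (m : ℕ) (h : ℕ → Finset ℕ → ℝ) :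
    ∑ j ∈ B, ∑ T ∈ (B.erase j).powersetCard m, h j T
      = ∑ S ∈ B.powersetCard (m+1), ∑ j ∈ S, h j (S.erase j) := by
  rw [Finset.sum_sigma', Finset.sum_sigma']
  refine Finset.sum_nbij' (fun p => ⟨insert p.1 p.2, p.1⟩) (fun q => ⟨q.2, q.1.erase q.2⟩) ?_ ?_ ?_ ?_ ?_
  · rintro ⟨j, T⟩ hp
    simp only [Finset.mem_sigma, Finset.mem_powersetCard] at hp ⊢
    obtain ⟨hj, hT, hcard⟩ := hp
    have hjT : j ∉ T := fun hmem => (Finset.mem_erase.mp (hT hmem)).1 rfl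
    refine ⟨⟨?_, ?_⟩, Finset.mem_insert_self _ _⟩
    · exact Finset.insert_subset hj (hT.trans (Finset.erase_subset _ _))
    · rw [Finset.card_insert_of_notMem hjT, hcard]
  · rintro ⟨S, j⟩ hq
    simp only [Finset.mem_sigma, Finset.mem_powersetCard] at hq ⊢
    obtain ⟨⟨hS, hcard⟩, hj⟩ := hq
    refine ⟨hS hj, ?_, ?_⟩
    · intro t ht
      exact Finset.mem_erase.mpr ⟨(Finset.mem_erase.mp ht).1, hS (Finset.mem_of_mem_erase ht)⟩
    · rw [Finset.card_erase_of_mem hj, hcard]; omega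
  · rintro ⟨j, T⟩ hp
    simp only [Finset.mem_sigma, Finset.mem_powersetCard] at hp
    obtain ⟨hj, hT, hcard⟩ := hp
    have hjT : j ∉ T := fun hmem => (Finset.mem_erase.mp (hT hmem)).1 rfl
    simp [Finset.erase_insert hjT]
  · rintro ⟨S, j⟩ hq
    simp only [Finset.mem_sigma, Finset.mem_powersetCard] at hq
    simp [Finset.insert_erase hq.2]
  · rintro ⟨j, T⟩ hp
    simp only [Finset.mem_sigma, Finset.mem_powersetCard] at hp
    obtain ⟨hj, hT, hcard⟩ := hp
    have hjT : j ∉ T := fun hmem => (Finset.mem_erase.mp (hT hmem)).1 rfl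
    simp [Finset.erase_insert hjT]

/-- L2: swap marked element outside the subset. -/
lemma sum_erase_powersetCard_out (B : Finset ℕ) (m : ℕ) (f : ℕ → Finset ℕ → ℝ) :
    ∑ j ∈ B, ∑ T ∈ (B.erase j).powersetCard m, f j T
      = ∑ T ∈ B.powersetCard m, ∑ j ∈ B \ T, f j T := by
  rw [Finset.sum_sigma', Finset.sum_sigma']
  refine Finset.sum_nbij' (fun p => ⟨p.2, p.1⟩) (fun q => ⟨q.2, q.1⟩) ?_ ?_ ?_ ?_ ?_
  · rintro ⟨j, T⟩ hp
    simp only [Finset.mem_sigma, Finset.mem_powersetCard, Finset.mem_sdiff] at hp ⊢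
    obtain ⟨hj, hT, hcard⟩ := hp
    exact ⟨⟨hT.trans (Finset.erase_subset _ _), hcard⟩, hj,
      fun hmem => (Finset.mem_erase.mp (hT hmem)).1 rfl⟩
  · rintro ⟨T, j⟩ hq
    simp only [Finset.mem_sigma, Finset.mem_powersetCard, Finset.mem_sdiff] at hq ⊢
    obtain ⟨⟨hT, hcard⟩, hj, hjT⟩ := hq
    exact ⟨hj, fun t ht => Finset.mem_erase.mpr ⟨fun he => hjT (he ▸ ht), hT ht⟩, hcard⟩
  · rintro ⟨j, T⟩ _; rfl
  · rintro ⟨T, j⟩ _; rfl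
  · rintro ⟨j, T⟩ _; rfl

/-- L4: symmetry swap on off-diagonal double sums. -/
lemma sum_offdiag_swap (A : Finset ℕ) (G : ℕ → ℕ → ℝ) :
    ∑ i ∈ A, ∑ j ∈ A.erase i, G i j = ∑ i ∈ A, ∑ j ∈ A.erase i, G j i := by
  rw [Finset.sum_sigma', Finset.sum_sigma']
  refine Finset.sum_nbij' (fun p => ⟨p.2, p.1⟩) (fun p => ⟨p.2, p.1⟩) ?_ ?_ ?_ ?_ ?_ <;>
    rintro ⟨i, j⟩ hp <;>
    simp only [Finset.mem_sigma, Finset.mem_erase] at hp ⊢ <;>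
    tauto

/-- recursion for elementary symmetric sums -/
lemma Esym_rec (x : ℕ → ℝ) {A : Finset ℕ} {i : ℕ} (hi : i ∈ A) (k : ℕ) :
    Esym x A (k+1) = Esym x (A.erase i) (k+1) + x i * Esym x (A.erase i) k := by
  simp only [Esym]
  conv_lhs => rw [← Finset.insert_erase hi]
  rw [Finset.powersetCard_succ_insert (Finset.notMem_erase i A)]
  rw [Finset.sum_union]
  · congr 1
    rw [Finset.sum_image, Finset.mul_sum]
    · refine Finset.sum_congr rfl fun S hS => ?_
      have hiS : i ∉ S := fun h =>
        Finset.notMem_erase i A ((Finset.mem_powersetCard.mp hS).1 h)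
      rw [Finset.prod_insert hiS]
    · intro S hS T hT h
      have hiS : i ∉ S := fun hh =>
        Finset.notMem_erase i A ((Finset.mem_powersetCard.mp hS).1 hh)
      have hiT : i ∉ T := fun hh =>
        Finset.notMem_erase i A ((Finset.mem_powersetCard.mp hT).1 hh)
      have h2 := congrArg (fun (U : Finset ℕ) => U.erase i) h
      simpa [Finset.erase_insert hiS, Finset.erase_insert hiT] using h2
  · rw [Finset.disjoint_left]
    intro S hS hS2
    simp only [Finset.mem_image] at hS2
    obtain ⟨T, hT, rfl⟩ := hS2
    exact Finset.notMem_erase i A ((Finset.mem_powersetCard.mp hS).1 (Finset.mem_insert_self _ _))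

/-- Identity 1: `∑_{i∈A} x i · e_k(A∖i) = (k+1) e_{k+1}(A)` -/
lemma Esym_marked (x : ℕ → ℝ) (A : Finset ℕ) (k : ℕ) :
    ∑ i ∈ A, x i * Esym x (A.erase i) k = (k+1 : ℝ) * Esym x A (k+1) := by
  have h := sum_erase_powersetCard A k (fun j T => x j * ∏ t ∈ T, x t)
  simp only [Esym, Finset.mul_sum]
  rw [h]
  refine Finset.sum_congr rfl fun S hS => ?_
  obtain ⟨hSA, hcard⟩ := Finset.mem_powersetCard.mp hS
  calc ∑ j ∈ S, x j * ∏ t ∈ S.erase j, x t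
      = ∑ j ∈ S, ∏ t ∈ S, x t := by
        refine Finset.sum_congr rfl fun j hj => Finset.mul_prod_erase S x hj
    _ = (k+1 : ℝ) * ∏ t ∈ S, x t := by
        rw [Finset.sum_const, hcard, nsmul_eq_mul]; push_cast; ring

/-- Key inequality: `(m+1)·∑ xᵢ e_{m+1}(A∖i) ≤ (|A|-(m+1))·∑ xᵢ² e_m(A∖i)`. -/
lemma key_ineq (x : ℕ → ℝ) (A : Finset ℕ) (m : ℕ) (hkA : m + 1 ≤ A.card)
    (hx : ∀ i ∈ A, 0 ≤ x i) :
    (m+1 : ℝ) * ∑ i ∈ A, x i * Esym x (A.erase i) (m+1)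
      ≤ ((A.card : ℝ) - (m+1)) * ∑ i ∈ A, x i ^ 2 * Esym x (A.erase i) m := by
  set Ψ : ℝ := ∑ i ∈ A, ∑ j ∈ A.erase i,
      ∑ T ∈ ((A.erase i).erase j).powersetCard m, x i ^ 2 * ∏ t ∈ T, x t with hΨ
  have step1 : (m+1 : ℝ) * ∑ i ∈ A, x i * Esym x (A.erase i) (m+1) ≤ Ψ := by
    rw [Finset.mul_sum]
    have expand : ∀ i ∈ A, (m+1:ℝ) * (x i * Esym x (A.erase i) (m+1))
        = ∑ S ∈ (A.erase i).powersetCard (m+1), ∑ j ∈ S, x i * (x j * ∏ t ∈ S.erase j, x t) := by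
      intro i hi
      rw [Esym, Finset.mul_sum, Finset.mul_sum]
      refine Finset.sum_congr rfl fun S hS => ?_
      obtain ⟨hSA, hcard⟩ := Finset.mem_powersetCard.mp hS
      rw [← Finset.mul_sum]
      have : ∑ j ∈ S, x j * ∏ t ∈ S.erase j, x t = (m+1 : ℝ) * ∏ t ∈ S, x t := by
        calc ∑ j ∈ S, x j * ∏ t ∈ S.erase j, x t
            = ∑ j ∈ S, ∏ t ∈ S, x t := Finset.sum_congr rfl fun j hj => Finset.mul_prod_erase S x hj
          _ = (m+1 : ℝ) * ∏ t ∈ S, x t := by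
              rw [Finset.sum_const, hcard, nsmul_eq_mul]; push_cast; ring
      rw [this]; ring
    calc ∑ i ∈ A, (m+1:ℝ) * (x i * Esym x (A.erase i) (m+1))
        = ∑ i ∈ A, ∑ S ∈ (A.erase i).powersetCard (m+1), ∑ j ∈ S,
            x i * (x j * ∏ t ∈ S.erase j, x t) := Finset.sum_congr rfl expand
      _ ≤ ∑ i ∈ A, ∑ S ∈ (A.erase i).powersetCard (m+1), ∑ j ∈ S,
            ((x i ^ 2 + x j ^ 2)/2) * ∏ t ∈ S.erase j, x t := by
          refine Finset.sum_le_sum fun i hi => Finset.sum_le_sum fun S hS =>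
            Finset.sum_le_sum fun j hj => ?_
          have prodnn : (0:ℝ) ≤ ∏ t ∈ S.erase j, x t := by
            refine Finset.prod_nonneg fun t ht => hx t ?_
            exact Finset.mem_of_mem_erase
              ((Finset.mem_powersetCard.mp hS).1 (Finset.mem_of_mem_erase ht))
          rw [← mul_assoc]
          refine mul_le_mul_of_nonneg_right ?_ prodnn
          nlinarith [sq_nonneg (x i - x j)]
      _ = ∑ i ∈ A, ∑ j ∈ A.erase i, ∑ T ∈ ((A.erase i).erase j).powersetCard m,
            ((x i ^ 2 + x j ^ 2)/2) * ∏ t ∈ T, x t := by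
          refine Finset.sum_congr rfl fun i hi => ?_
          rw [← sum_erase_powersetCard (A.erase i) m
            (fun j T => ((x i ^ 2 + x j ^ 2)/2) * ∏ t ∈ T, x t)]
      _ = Ψ := by
          set Ψ2 : ℝ := ∑ i ∈ A, ∑ j ∈ A.erase i,
              ∑ T ∈ ((A.erase i).erase j).powersetCard m, x j ^ 2 * ∏ t ∈ T, x t with hΨ2
          have hΨ2Ψ : Ψ2 = Ψ := by
            rw [hΨ2, sum_offdiag_swap A (fun i j =>
              ∑ T ∈ ((A.erase i).erase j).powersetCard m, x j ^ 2 * ∏ t ∈ T, x t), hΨ]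
            refine Finset.sum_congr rfl fun i _ => Finset.sum_congr rfl fun j _ => ?_
            rw [Finset.erase_right_comm]
          have : ∑ i ∈ A, ∑ j ∈ A.erase i, ∑ T ∈ ((A.erase i).erase j).powersetCard m,
              ((x i ^ 2 + x j ^ 2)/2) * ∏ t ∈ T, x t = (1/2) * Ψ + (1/2) * Ψ2 := by
            rw [hΨ, hΨ2, Finset.mul_sum, Finset.mul_sum, ← Finset.sum_add_distrib]
            refine Finset.sum_congr rfl fun i _ => ?_
            rw [Finset.mul_sum, Finset.mul_sum, ← Finset.sum_add_distrib]
            refine Finset.sum_congr rfl fun j _ => ?_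
            rw [Finset.mul_sum, Finset.mul_sum, ← Finset.sum_add_distrib]
            refine Finset.sum_congr rfl fun T _ => ?_
            ring
          rw [this, hΨ2Ψ]; ring
  have step2 : Ψ = ((A.card : ℝ) - (m+1)) * ∑ i ∈ A, x i ^ 2 * Esym x (A.erase i) m := by
    rw [hΨ, Finset.mul_sum]
    refine Finset.sum_congr rfl fun i hi => ?_
    rw [sum_erase_powersetCard_out (A.erase i) m (fun j T => x i ^ 2 * ∏ t ∈ T, x t)]
    have hcardB : (A.erase i).card = A.card - 1 := Finset.card_erase_of_mem hi
    rw [Esym, Finset.mul_sum, Finset.mul_sum]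
    refine Finset.sum_congr rfl fun T hT => ?_
    obtain ⟨hTB, hTcard⟩ := Finset.mem_powersetCard.mp hT
    rw [Finset.sum_const, Finset.card_sdiff_of_subset hTB, hcardB, hTcard, nsmul_eq_mul]
    have h1 : (1:ℕ) ≤ A.card := le_trans (Nat.le_add_left 1 m) hkA
    have : ((A.card - 1 - m : ℕ) : ℝ) = (A.card : ℝ) - (m+1) := by
      have : A.card - 1 - m = A.card - (m+1) := by omega
      rw [this, Nat.cast_sub hkA]; push_cast; ring
    rw [this]; try ring
  linarith [step1, step2.ge]

lemma newton_step (x : ℕ → ℝ) (A : Finset ℕ) (m : ℕ) (h2 : m + 2 ≤ A.card)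
    (hx : ∀ i ∈ A, 0 ≤ x i) :
    (A.card : ℝ) * ((m+2 : ℝ) * Esym x A (m+2))
      ≤ ((A.card : ℝ) - (m+1)) * (Esym x A 1 * Esym x A (m+1)) := by
  set n : ℝ := (A.card : ℝ) with hn
  set Sig1 : ℝ := ∑ i ∈ A, x i * Esym x (A.erase i) (m+1) with hSig1
  set Sig2 : ℝ := ∑ i ∈ A, x i ^ 2 * Esym x (A.erase i) m with hSig2
  have hdecomp : Esym x A 1 * Esym x A (m+1) = Sig1 + Sig2 := by
    rw [Esym_one, Finset.sum_mul, hSig1, hSig2, ← Finset.sum_add_distrib]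
    refine Finset.sum_congr rfl fun i hi => ?_
    rw [Esym_rec x hi m]; ring
  have hmarked : Sig1 = (m+2 : ℝ) * Esym x A (m+2) := by
    rw [hSig1, Esym_marked x A (m+1)]; push_cast; ring
  have hkey : (m+1 : ℝ) * Sig1 ≤ (n - (m+1)) * Sig2 :=
    key_ineq x A m (le_trans (by omega) h2) hx
  have hSig1nn : 0 ≤ Sig1 := by
    refine Finset.sum_nonneg fun i hi => mul_nonneg (hx i hi) (Esym_nonneg ?_ _)
    exact fun t ht => hx t (Finset.mem_of_mem_erase ht)
  have hcast : (m+2 : ℝ) ≤ n := by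
    rw [hn]; exact_mod_cast h2
  nlinarith [hdecomp, hmarked, hkey, hSig1nn]

lemma maclaurin (x : ℕ → ℝ) (A : Finset ℕ) (hx : ∀ i ∈ A, 0 ≤ x i) :
    ∀ k : ℕ, k ≤ A.card →
      Esym x A k * (A.card : ℝ) ^ k ≤ (A.card.choose k : ℝ) * (Esym x A 1) ^ k := by
  have e1nn : 0 ≤ Esym x A 1 := Esym_nonneg hx 1
  intro k
  induction k with
  | zero => simp [Esym_zero]
  | succ k ih =>
    intro hk1
    match k, ih with
    | 0, _ => simp [Nat.choose_one_right, mul_comm]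
    | (m+1), ih =>
      have hm2 : m + 2 ≤ A.card := hk1
      have ihm : Esym x A (m+1) * (A.card : ℝ) ^ (m+1)
          ≤ (A.card.choose (m+1) : ℝ) * (Esym x A 1) ^ (m+1) := ih (by omega)
      have hns : ((A.card - (m+1) : ℕ) : ℝ) = (A.card : ℝ) - (m+1) := by
        rw [Nat.cast_sub (by omega)]; push_cast; ring
      have hchoose : (A.card.choose (m+2) : ℝ) * (m+2)
          = (A.card.choose (m+1) : ℝ) * ((A.card : ℝ) - (m+1)) := by
        have := Nat.choose_succ_right_eq A.card (m+1)
        have hcast := congrArg (fun t : ℕ => (t : ℝ)) this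
        push_cast at hcast
        rw [hns] at hcast
        convert hcast using 2 <;> push_cast <;> ring
      have hstep := newton_step x A m hm2 hx
      have hsub : (0:ℝ) ≤ (A.card : ℝ) - (m+1) := by
        have : ((m+1 : ℕ) : ℝ) ≤ (A.card : ℝ) := by exact_mod_cast (by omega : m+1 ≤ A.card)
        push_cast at this ⊢; linarith
      have hpow : (0:ℝ) ≤ (A.card : ℝ) ^ (m+1) := by positivity
      have key : (m+2 : ℝ) * (Esym x A (m+2) * (A.card : ℝ) ^ (m+2))
          ≤ (m+2 : ℝ) * ((A.card.choose (m+2) : ℝ) * (Esym x A 1) ^ (m+2)) := by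
        calc (m+2 : ℝ) * (Esym x A (m+2) * (A.card : ℝ) ^ (m+2))
            = ((A.card : ℝ) * ((m+2 : ℝ) * Esym x A (m+2))) * (A.card : ℝ) ^ (m+1) := by
              rw [pow_succ]; ring
          _ ≤ (((A.card : ℝ) - (m+1)) * (Esym x A 1 * Esym x A (m+1))) * (A.card : ℝ) ^ (m+1) :=
              mul_le_mul_of_nonneg_right hstep hpow
          _ = (((A.card : ℝ) - (m+1)) * Esym x A 1) * (Esym x A (m+1) * (A.card : ℝ) ^ (m+1)) := by
              ring
          _ ≤ (((A.card : ℝ) - (m+1)) * Esym x A 1)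
                * ((A.card.choose (m+1) : ℝ) * (Esym x A 1) ^ (m+1)) := by
              refine mul_le_mul_of_nonneg_left ihm (mul_nonneg hsub e1nn)
          _ = ((A.card.choose (m+1) : ℝ) * ((A.card : ℝ) - (m+1))) * (Esym x A 1) ^ (m+2) := by
              rw [pow_succ]; ring
          _ = (m+2 : ℝ) * ((A.card.choose (m+2) : ℝ) * (Esym x A 1) ^ (m+2)) := by
              rw [← hchoose]; ring
      have hm2pos : (0:ℝ) < (m+2 : ℝ) := by positivity
      have := (mul_le_mul_iff_of_pos_left hm2pos).mp key
      convert this using 2 <;> push_cast <;> ring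

/-- For a uniformly random `k`-subset `{i_1 < ... < i_k}` of `{1,...,d}` and
`F = 1/(d·∏_j (d - i_j + 1))`, we have `E[F] ≤ (1/d)·((1 + log d)/d)^k`. -/
theorem stmt_5 (d k : ℕ) (hd : 1 ≤ d) (hk1 : 1 ≤ k) (hkd : k ≤ d) :
    (∑ s ∈ (Finset.Icc 1 d).powersetCard k,
        (1 : ℝ) / (d * ∏ i ∈ s, ((d - i + 1 : ℕ) : ℝ))) / (d.choose k : ℝ)
      ≤ (1 / d) * ((1 + Real.log d) / d) ^ k := by
  set x : ℕ → ℝ := fun i => ((d - i + 1 : ℕ) : ℝ)⁻¹ with hxdef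
  set A : Finset ℕ := Finset.Icc 1 d with hA
  have hcardA : A.card = d := by rw [hA, Nat.card_Icc]; omega
  have hx : ∀ i ∈ A, 0 ≤ x i := fun i _ => by positivity
  have hdpos : (0:ℝ) < d := by exact_mod_cast hd
  -- rewrite the sum as (1/d) * Esym
  have hsum : (∑ s ∈ A.powersetCard k, (1 : ℝ) / (d * ∏ i ∈ s, ((d - i + 1 : ℕ) : ℝ)))
      = (d:ℝ)⁻¹ * Esym x A k := by
    rw [Esym, Finset.mul_sum]
    refine Finset.sum_congr rfl fun s hs => ?_
    simp only [hxdef, one_div, mul_inv, Finset.prod_inv_distrib]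
  -- e1 = harmonic d
  have he1 : Esym x A 1 = (harmonic d : ℝ) := by
    rw [Esym_one, hA, hxdef]
    rw [harmonic_eq_sum_Icc]
    push_cast
    refine Finset.sum_nbij' (fun i => d + 1 - i) (fun i => d + 1 - i) ?_ ?_ ?_ ?_ ?_
    · intro i hi; simp only [Finset.mem_Icc] at hi ⊢; omega
    · intro i hi; simp only [Finset.mem_Icc] at hi ⊢; omega
    · intro i hi; simp only [Finset.mem_Icc] at hi
      show d + 1 - (d + 1 - i) = i; omega
    · intro i hi; simp only [Finset.mem_Icc] at hi
      show d + 1 - (d + 1 - i) = i; omega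
    · intro i hi
      simp only [Finset.mem_Icc] at hi
      have h2 : d + 1 - i = (d - i) + 1 := by omega
      simp only [h2]
      push_cast
      ring
  have he1le : Esym x A 1 ≤ 1 + Real.log d := by
    rw [he1]
    exact_mod_cast harmonic_le_one_add_log d
  have he1nn : 0 ≤ Esym x A 1 := Esym_nonneg hx 1
  have hlognn : (0:ℝ) ≤ 1 + Real.log d := by
    have : (0:ℝ) ≤ Real.log d := Real.log_nonneg (by exact_mod_cast hd)
    linarith
  have hmac : Esym x A k * (d : ℝ) ^ k ≤ (d.choose k : ℝ) * (1 + Real.log d) ^ k := by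
    have h1 := maclaurin x A hx k (by omega)
    rw [hcardA] at h1
    calc Esym x A k * (d : ℝ) ^ k ≤ (d.choose k : ℝ) * (Esym x A 1) ^ k := h1
      _ ≤ (d.choose k : ℝ) * (1 + Real.log d) ^ k := by
          refine mul_le_mul_of_nonneg_left ?_ (by positivity)
          exact pow_le_pow_left₀ he1nn he1le k
  have hC : (0:ℝ) < (d.choose k : ℝ) := by exact_mod_cast Nat.choose_pos hkd
  rw [hsum, mul_div_assoc, one_div]
  refine mul_le_mul_of_nonneg_left ?_ (by positivity)
  rw [div_pow, div_le_div_iff₀ hC (by positivity : (0:ℝ) < (d:ℝ)^k)]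
  calc Esym x A k * (d:ℝ)^k ≤ (d.choose k : ℝ) * (1 + Real.log d) ^ k := hmac
    _ = (1 + Real.log ↑d) ^ k * ↑(d.choose k) := by ring
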